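/- Let T be a triangulated category, A a hopfian object and E an exotic object. Then T(A, E) = 0. -/

import Mathlib

open CategoryTheory Limits Pretriangulated

variable {C : Type*} [Category C] [Preadditive C] [HasZeroObject C]
  [HasShift C ℤ] [∀ n : ℤ, (shiftFunctor C n).Additive] [Pretriangulated C]
  [IsTriangulated C]

/-- A Hopf map for `A`: a morphism `η : ΣA ⟶ A` with `2η = 0` such that for some exact
triangle `A →2 A →i C →q ΣA` one has `iηq = 2·1_C`. -/
def IsHopfMap (A : C) (η : A⟦(1 : ℤ)⟧ ⟶ A) : Prop :=
  (2 : ℤ) • η = 0 ∧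
  ∃ (Cone : C) (i : A ⟶ Cone) (q : Cone ⟶ A⟦(1 : ℤ)⟧),
    Triangle.mk ((2 : ℤ) • 𝟙 A) i q ∈ (distTriang C) ∧
      q ≫ η ≫ i = (2 : ℤ) • 𝟙 Cone

/-- An object admitting a Hopf map. -/
def IsHopfian (A : C) : Prop := ∃ η : A⟦(1 : ℤ)⟧ ⟶ A, IsHopfMap A η

/-- An exotic object: one fitting in an exact triangle `E →2 E →2 E →h ΣE`. -/
def IsExotic (E : C) : Prop :=
  ∃ h : E ⟶ E⟦(1 : ℤ)⟧,
    Triangle.mk ((2 : ℤ) • 𝟙 E) ((2 : ℤ) • 𝟙 E) h ∈ distTriang C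

/-- If `A` is hopfian and `E` is exotic, then every morphism `A ⟶ E` is zero. -/
theorem stmt_12 (A E : C) (hA : IsHopfian A) (hE : IsExotic E) (f : A ⟶ E) : f = 0 := by
  obtain ⟨η, hη2, Cone, i, q, hTA, hqi⟩ := hA
  obtain ⟨h, hTE⟩ := hE
  -- 2h = 0
  have h2h : (2 : ℤ) • h = 0 := by
    have := comp_distTriang_mor_zero₂₃ _ hTE
    simp only [Triangle.mk_mor₁, Triangle.mk_mor₂, Triangle.mk_mor₃] at this
    erw [Preadditive.zsmul_comp, Category.id_comp] at this
    exact this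
  -- 4 • 𝟙 E = 0
  have h4 : (4 : ℤ) • (𝟙 E) = 0 := by
    have := comp_distTriang_mor_zero₁₂ _ hTE
    simp only [Triangle.mk_mor₁, Triangle.mk_mor₂, Triangle.mk_mor₃] at this
    erw [Preadditive.zsmul_comp, Preadditive.comp_zsmul, smul_smul, Category.id_comp] at this
    exact this
  -- key claim: every morphism A ⟶ E is divisible by 2
  have key : ∀ g : A ⟶ E, ∃ v : A ⟶ E, g = (2 : ℤ) • v := by
    intro g
    obtain ⟨φ, hφ₁, hφ₂⟩ : ∃ φ : Cone ⟶ E, i ≫ φ = g ≫ ((2 : ℤ) • 𝟙 E) ∧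
        q ≫ g⟦(1 : ℤ)⟧' = φ ≫ h := complete_distinguished_triangle_morphism _ _ hTA hTE g g (by
      show ((2:ℤ) • 𝟙 A) ≫ g = g ≫ ((2:ℤ) • 𝟙 E)
      rw [Preadditive.zsmul_comp, Preadditive.comp_zsmul, Category.id_comp, Category.comp_id])
    try dsimp at hφ₁ hφ₂
    -- 2φ = 0
    have h2φ : (2 : ℤ) • φ = 0 := by
      have : (2 : ℤ) • φ = ((2 : ℤ) • 𝟙 Cone) ≫ φ := by
        rw [Preadditive.zsmul_comp, Category.id_comp]
      rw [this, ← hqi, Category.assoc, Category.assoc, hφ₁, Preadditive.comp_zsmul,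
        Category.comp_id]
      have h0 : η ≫ ((2 : ℤ) • g) = 0 := by
        rw [Preadditive.comp_zsmul, ← Preadditive.zsmul_comp, hη2, Limits.zero_comp]
      rw [h0, Limits.comp_zero]
    -- φ factors through multiplication by 2 on E
    obtain ⟨ψ, hψ⟩ : ∃ ψ : Cone ⟶ E, φ = ψ ≫ ((2 : ℤ) • 𝟙 E) := Triangle.coyoneda_exact₂ _ hTE φ (by
      show φ ≫ ((2 : ℤ) • 𝟙 E) = 0
      rw [Preadditive.comp_zsmul, Category.comp_id]
      exact h2φ)
    try dsimp at hψ
    -- q ≫ g⟦1⟧ = 0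
    have hq0 : q ≫ g⟦(1 : ℤ)⟧' = 0 := by
      rw [hφ₂, hψ, Category.assoc, show ((2 : ℤ) • 𝟙 E) ≫ h = (2 : ℤ) • h by
        rw [Preadditive.zsmul_comp, Category.id_comp], h2h, Limits.comp_zero]
    -- g⟦1⟧ factors through multiplication by 2 on A⟦1⟧
    obtain ⟨w, hw⟩ : ∃ w : A⟦(1 : ℤ)⟧ ⟶ E⟦(1 : ℤ)⟧,
        g⟦(1 : ℤ)⟧' = (-((2 : ℤ) • 𝟙 A)⟦(1 : ℤ)⟧') ≫ w := Triangle.yoneda_exact₃ _ (rot_of_distTriang _ hTA)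
      (g⟦(1 : ℤ)⟧') (by exact hq0)
    try dsimp at hw
    simp only [Functor.map_zsmul, Functor.map_id, Preadditive.neg_comp, Preadditive.zsmul_comp,
      Category.id_comp, ← smul_neg] at hw
    refine ⟨(shiftFunctor C (1 : ℤ)).preimage (-w), ?_⟩
    apply (shiftFunctor C (1 : ℤ)).map_injective
    rw [Functor.map_zsmul, Functor.map_preimage]
    simpa using hw
  obtain ⟨v, hv⟩ := key f
  obtain ⟨w, hw⟩ := key v
  rw [hv, hw, smul_smul, show ((2 : ℤ) * 2) = 4 by norm_num,
    show (4 : ℤ) • w = w ≫ ((4 : ℤ) • 𝟙 E) by rw [Preadditive.comp_zsmul, Category.comp_id],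
    h4, Limits.comp_zero]
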